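/- Let (a_{ij})_{1≤i,j≤θ} be a generalized Cartan matrix (a_{ii}=2, a_{ij} ≤ 0 integers for i≠j, a_{ij}=0 iff a_{ji}=0) whose associated graph (edge between i≠j iff a_{ij} ≠ 0) is connected, and let (q_{ij}) be a symmetric matrix of positive real numbers with q_{ii} ≠ 1 and q_{ij}q_{ji} = q_{ii}^{a_{ij}} for all i,j. Then there exist a positive real number q ≠ 1 and positive integers d_1,…,d_θ such that q_{ii} = q^{d_i} for all i and q_{ij}q_{ji} = q^{d_i a_{ij}} = q^{d_j a_{ji}} for all i,j. -/

import Mathlib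

/-- Lemma 2.5 (Rosso): an indecomposable positive symmetric braiding of Cartan
type is (twist-equivalent to one) of DJ-type: there exist a positive real
`q₀ ≠ 1` and positive integers `d i` such that `q i i = q₀ ^ d i` and
`q i j * q j i = q₀ ^ (d i * a i j) = q₀ ^ (d j * a j i)` for all `i, j`. -/
theorem stmt2 {θ : ℕ}
    (a : Fin θ → Fin θ → ℤ)
    (hdiag : ∀ i, a i i = 2)
    (hoff : ∀ i j, i ≠ j → a i j ≤ 0)
    (hzero : ∀ i j, a i j = 0 ↔ a j i = 0)
    (hconn : ∀ i j : Fin θ, Relation.ReflTransGen (fun i' j' => a i' j' ≠ 0) i j)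
    (q : Fin θ → Fin θ → ℝ)
    (hpos : ∀ i j, 0 < q i j)
    (hsymm : ∀ i j, q i j = q j i)
    (hne1 : ∀ i, q i i ≠ 1)
    (hcartan : ∀ i j, q i j * q j i = q i i ^ a i j) :
    ∃ q₀ : ℝ, 0 < q₀ ∧ q₀ ≠ 1 ∧ ∃ d : Fin θ → ℕ,
      (∀ i, 0 < d i) ∧ (∀ i, q i i = q₀ ^ (d i)) ∧
      ∀ i j, q i j * q j i = q₀ ^ ((d i : ℤ) * a i j) ∧
        q i j * q j i = q₀ ^ ((d j : ℤ) * a j i) := by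
  rcases Nat.eq_zero_or_pos θ with hθ | hθ
  · subst hθ
    exact ⟨2, by norm_num, by norm_num, fun i => 1, fun i => i.elim0, fun i => i.elim0,
      fun i => i.elim0⟩
  set i₀ : Fin θ := ⟨0, hθ⟩ with hi₀
  set L : Fin θ → ℝ := fun i => Real.log (q i i) with hLdef
  have hLne : ∀ i, L i ≠ 0 := by
    intro i h
    have := Real.exp_log (hpos i i)
    rw [show Real.log (q i i) = L i from rfl, h, Real.exp_zero] at this
    exact hne1 i this.symm
  have key : ∀ i j, (a i j : ℝ) * L i = (a j i : ℝ) * L j := by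
    intro i j
    have h1 := hcartan i j
    have h2 := hcartan j i
    have h3 : (q i i : ℝ) ^ (a i j) = q j j ^ (a j i) := by
      rw [← h1, ← h2, mul_comm]
    have h4 := congrArg Real.log h3
    simpa [Real.log_zpow] using h4
  have exist : ∀ i, ∃ nm : ℕ × ℕ, 0 < nm.1 ∧ 0 < nm.2 ∧ (nm.2 : ℝ) * L i = (nm.1 : ℝ) * L i₀ := by
    intro i
    induction hconn i₀ i with
    | refl => exact ⟨(1, 1), one_pos, one_pos, rfl⟩
    | @tail b c h hrel ih =>
      obtain ⟨⟨n, m⟩, hn, hm, hrel0⟩ := ih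
      by_cases hbceq : b = c
      · exact ⟨(n, m), hn, hm, hbceq ▸ hrel0⟩
      · have hbc' : a b c < 0 := lt_of_le_of_ne (hoff _ _ hbceq) hrel
        have hcb : a c b < 0 :=
          lt_of_le_of_ne (hoff _ _ (Ne.symm hbceq)) (fun h => hrel ((hzero _ _).mpr h))
        have e1 : (((-(a b c)).toNat : ℕ) : ℝ) = -(a b c : ℝ) := by
          have := Int.toNat_of_nonneg (by linarith : (0:ℤ) ≤ -(a b c))
          exact_mod_cast congrArg (fun z : ℤ => (z : ℝ)) this
        have e2 : (((-(a c b)).toNat : ℕ) : ℝ) = -(a c b : ℝ) := by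
          have := Int.toNat_of_nonneg (by linarith : (0:ℤ) ≤ -(a c b))
          exact_mod_cast congrArg (fun z : ℤ => (z : ℝ)) this
        refine ⟨(n * (-(a b c)).toNat, m * (-(a c b)).toNat),
          Nat.mul_pos hn (by omega), Nat.mul_pos hm (by omega), ?_⟩
        have hk := key b c
        push_cast [e1, e2]
        linear_combination (m : ℝ) * hk - (a b c : ℝ) * hrel0
  choose nm hn hm hrel using exist
  set M : ℕ := ∏ i, (nm i).2 with hM
  have hMpos : 0 < M := Finset.prod_pos (fun i _ => hm i)
  have hdvd : ∀ i, (nm i).2 ∣ M := fun i => Finset.dvd_prod_of_mem _ (Finset.mem_univ i)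
  set c : ℝ := L i₀ / M with hc
  have hcne : c ≠ 0 := div_ne_zero (hLne i₀) (Nat.cast_ne_zero.mpr hMpos.ne')
  refine ⟨Real.exp c, Real.exp_pos c, fun h => hcne (Real.exp_injective (by rw [h, Real.exp_zero])) , ?_⟩
  refine ⟨fun i => (nm i).1 * (M / (nm i).2), ?_, ?_, ?_⟩
  · intro i
    exact Nat.mul_pos (hn i) (Nat.div_pos (Nat.le_of_dvd hMpos (hdvd i)) (hm i))
  · intro i
    have hcast : ((M / (nm i).2 : ℕ) : ℝ) = (M : ℝ) / ((nm i).2 : ℝ) :=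
      Nat.cast_div (hdvd i) (Nat.cast_ne_zero.mpr (hm i).ne')
    have hdc : (((nm i).1 * (M / (nm i).2) : ℕ) : ℝ) * c = L i := by
      push_cast [hcast]
      rw [hc]
      have h1 : ((nm i).2 : ℝ) ≠ 0 := Nat.cast_ne_zero.mpr (hm i).ne'
      have h2 : (M : ℝ) ≠ 0 := Nat.cast_ne_zero.mpr hMpos.ne'
      field_simp
      linear_combination (-1 : ℝ) * (hrel i)
    rw [← Real.exp_nat_mul, hdc, Real.exp_log (hpos i i)]
  · have hqii : ∀ i, q i i = Real.exp c ^ ((nm i).1 * (M / (nm i).2)) := by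
      -- reprove (same as above) to use below
      intro i
      have hcast : ((M / (nm i).2 : ℕ) : ℝ) = (M : ℝ) / ((nm i).2 : ℝ) :=
        Nat.cast_div (hdvd i) (Nat.cast_ne_zero.mpr (hm i).ne')
      have hdc : (((nm i).1 * (M / (nm i).2) : ℕ) : ℝ) * c = L i := by
        push_cast [hcast]
        rw [hc]
        have h1 : ((nm i).2 : ℝ) ≠ 0 := Nat.cast_ne_zero.mpr (hm i).ne'
        have h2 : (M : ℝ) ≠ 0 := Nat.cast_ne_zero.mpr hMpos.ne'
        field_simp
        linear_combination (-1 : ℝ) * (hrel i)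
      rw [← Real.exp_nat_mul, hdc, Real.exp_log (hpos i i)]
    have main : ∀ i j, q i j * q j i =
        Real.exp c ^ ((((nm i).1 * (M / (nm i).2) : ℕ) : ℤ) * a i j) := by
      intro i j
      rw [hcartan i j, hqii i, ← zpow_natCast, ← zpow_mul]
    intro i j
    refine ⟨main i j, ?_⟩
    have h := main j i
    rw [mul_comm (q j i)] at h
    exact h
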